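/- Let u be a nonzero Laurent polynomial over ℂ having symmetry with type ε z^c (ε ∈ {1,−1}, c ∈ ℤ). Then ε = (−1)^{mz(u,1)} and c ≡ mz(u,1) + mz(u,−1) (mod 2). -/

import Mathlib

open LaurentPolynomial Matrix
open scoped Classical

noncomputable section

abbrev LP := LaurentPolynomial ℂ

namespace QT

/-- The coefficient of `z^k` in a Laurent polynomial. -/
def coeff (u : LP) (k : ℤ) : ℂ := (AddMonoidAlgebra.coeff u) k

/-- The Hermitian conjugate `u⋆(z) = Σ conj(u(k)) z^{-k}`. -/
def hstar (u : LP) : LP :=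
  AddMonoidAlgebra.ofCoeff (
    Finsupp.mapDomain (fun k => -k)
      (Finsupp.mapRange (starRingEnd ℂ) (map_zero _) (AddMonoidAlgebra.coeff u)))

/-- `u` has symmetry with type `ε z^c`, i.e. `u(k) = ε u(c-k)` for all `k`. -/
def SymT (u : LP) (ε : ℂ) (c : ℤ) : Prop := ∀ k : ℤ, coeff u k = ε * coeff u (c - k)

def Sgn (ε : ℂ) : Prop := ε = 1 ∨ ε = -1

/-- `u` has symmetry (with some type). -/
def HasSym (u : LP) : Prop := ∃ ε c, Sgn ε ∧ SymT u ε c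

/-- The Laurent polynomial `z - a`. -/
def zsub (a : ℂ) : LP := T 1 - LaurentPolynomial.C a

/-- `m` is the multiplicity of `z₀` as a zero of `u`. -/
def mzIs (u : LP) (z₀ : ℂ) (m : ℕ) : Prop := zsub z₀ ^ m ∣ u ∧ ¬ zsub z₀ ^ (m + 1) ∣ u

/-- The multiplicity of `z₀` as a zero of `u`, as a function. -/
def mzF (u : LP) (z₀ : ℂ) : ℕ := sSup {m : ℕ | zsub z₀ ^ m ∣ u}

/-- The difference-of-(Hermitian)-squares property with respect to symmetry type `ε z^c`. -/
def DOS (u : LP) (ε : ℂ) (c : ℤ) : Prop :=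
  ∃ (u₁ u₂ : LP) (ε₁ ε₂ : ℂ) (c₁ c₂ : ℤ),
    Sgn ε₁ ∧ Sgn ε₂ ∧ SymT u₁ ε₁ c₁ ∧ SymT u₂ ε₂ c₂ ∧
    u₁ * hstar u₁ - u₂ * hstar u₂ = u ∧ ε₁ * ε₂ = ε ∧ c₁ - c₂ = c

/-- Degree: the largest exponent with nonzero coefficient (0 for the zero polynomial). -/
def degL (u : LP) : ℤ :=
  if h : u = 0 then 0
  else (AddMonoidAlgebra.coeff u).support.max' (Finsupp.support_nonempty_iff.mpr
    (fun h0 => h (by rw [← AddMonoidAlgebra.ofCoeff_coeff u, h0]; rfl)))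

/-- Lower degree: the smallest exponent with nonzero coefficient (0 for zero). -/
def ldegL (u : LP) : ℤ :=
  if h : u = 0 then 0
  else (AddMonoidAlgebra.coeff u).support.min' (Finsupp.support_nonempty_iff.mpr
    (fun h0 => h (by rw [← AddMonoidAlgebra.ofCoeff_coeff u, h0]; rfl)))

/-- Length `deg - ldeg`, with `len 0 = ⊥`. -/
def lenL (u : LP) : WithBot ℤ := if u = 0 then ⊥ else ((degL u - ldegL u : ℤ) : WithBot ℤ)

/-- `g` is a greatest common divisor of `a` and `b`. -/
def IsGCD2 (g a b : LP) : Prop := g ∣ a ∧ g ∣ b ∧ ∀ e : LP, e ∣ a → e ∣ b → e ∣ g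

/-- `g` is a greatest common divisor of `a`, `b`, `c`, `d`. -/
def IsGCD4 (g a b c d : LP) : Prop :=
  g ∣ a ∧ g ∣ b ∧ g ∣ c ∧ g ∣ d ∧ ∀ e : LP, e ∣ a → e ∣ b → e ∣ c → e ∣ d → e ∣ g

/-- The Hermitian conjugate transpose of a matrix of Laurent polynomials. -/
def hstarM (A : Matrix (Fin 2) (Fin 2) LP) : Matrix (Fin 2) (Fin 2) LP :=
  fun i j => hstar (A j i)

def IsHerm (A : Matrix (Fin 2) (Fin 2) LP) : Prop := hstarM A = A

/-- `diag(1, -1)`. -/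
def Jmat : Matrix (Fin 2) (Fin 2) LP := Matrix.diagonal ![1, -1]

/-- A square matrix of Laurent polynomials is strongly invertible if its determinant is a
nonzero monomial. -/
def StrongInv (A : Matrix (Fin 2) (Fin 2) LP) : Prop :=
  ∃ (lam : ℂ) (k : ℤ), lam ≠ 0 ∧ A.det = LaurentPolynomial.C lam * T k

/-- Compatible symmetry for a `2×2` matrix of Laurent polynomials. -/
def CompatSym (A : Matrix (Fin 2) (Fin 2) LP) : Prop :=
  ∃ (ε ε' : Fin 2 → ℂ) (c c' : Fin 2 → ℤ),
    (∀ j, Sgn (ε j)) ∧ (∀ k, Sgn (ε' k)) ∧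
    ∀ j k, SymT (A j k) (ε j * ε' k) (c' k - c j)

/-- Substitution `z ↦ z²`. -/
def sqDom (u : LP) : LP :=
  AddMonoidAlgebra.ofCoeff (Finsupp.mapDomain (fun k => 2 * k) (AddMonoidAlgebra.coeff u))

/-- Substitution `z ↦ -z`. -/
def negSub (u : LP) : LP :=
  (AddMonoidAlgebra.coeff u).sum fun k c => show LP from AddMonoidAlgebra.ofCoeff (Finsupp.single k ((-1 : ℂ) ^ k * c))

/-- The `γ`-coset `u^{[γ]}(z) = Σ_k u(γ + 2k) z^k`. -/
def cosetL (u : LP) (γ : ℤ) : LP :=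
  AddMonoidAlgebra.ofCoeff (
    Finsupp.comapDomain (fun k : ℤ => γ + 2 * k) (AddMonoidAlgebra.coeff u)
      (by intro a _ b _ h; simp only at h; omega))

/-- Evaluation of a Laurent polynomial at a point. -/
def evalL (u : LP) (z : ℂ) : ℂ := (AddMonoidAlgebra.coeff u).sum fun k c => c * z ^ k

/-- `{a; b₁, b₂}_{Θ,(1,-1)}` is a quasi-tight framelet filter bank. -/
def QTFB (a Θ b₁ b₂ : LP) : Prop :=
  sqDom Θ * hstar a * a + hstar b₁ * b₁ - hstar b₂ * b₂ = Θ ∧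
  sqDom Θ * hstar a * negSub a + hstar b₁ * negSub b₁ - hstar b₂ * negSub b₂ = 0

/-- The matrix `N_{a,Θ|n_b}` built from the quotients `A`, `B`. -/
def Nmat (A B : LP) : Matrix (Fin 2) (Fin 2) LP :=
  LaurentPolynomial.C (2 : ℂ)⁻¹ •
    !![cosetL A 0 + cosetL B 0, cosetL A 1 - cosetL B 1;
       T 1 * (cosetL A 1 + cosetL B 1), cosetL A 0 - cosetL B 0]

/-- evaluation at a unit, as an algebra hom -/
def ev (ζ : ℂˣ) : LP →ₐ[ℂ] ℂ :=
  AddMonoidAlgebra.lift ℂ ℂ ℤ ((Units.coeHom ℂ).comp (zpowersHom ℂˣ ζ))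

lemma ev_T (ζ : ℂˣ) (n : ℤ) : ev ζ (T n) = (ζ : ℂ) ^ n := by
  show ev ζ (AddMonoidAlgebra.single n 1) = _
  rw [ev, AddMonoidAlgebra.lift_single]
  simp [zpowersHom_apply]

lemma ev_C (ζ : ℂˣ) (a : ℂ) : ev ζ (LaurentPolynomial.C a) = a := by
  show ev ζ (AddMonoidAlgebra.single 0 a) = a
  rw [ev, AddMonoidAlgebra.lift_single]
  simp [zpowersHom_apply]

lemma ev_invert (ζ : ℂˣ) (u : LP) : ev ζ (invert u) = ev ζ⁻¹ u := by
  have : (ev ζ).comp (invert.toAlgHom) = ev ζ⁻¹ := by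
    apply AddMonoidAlgebra.algHom_ext
    intro n
    show ev ζ (invert (T n)) = ev ζ⁻¹ (T n)
    rw [invert_T, ev_T, ev_T]
    simp [_root_.zpow_neg]
    exact Subsingleton.elim _ _
  exact DFunLike.congr_fun this u

lemma ev_toLaurent (ζ : ℂˣ) (p : Polynomial ℂ) :
    ev ζ (Polynomial.toLaurent p) = Polynomial.eval (ζ : ℂ) p := by
  have : (ev ζ).comp (Polynomial.toLaurentAlg) = Polynomial.aeval (ζ : ℂ) := by
    apply Polynomial.algHom_ext
    show ev ζ (Polynomial.toLaurent Polynomial.X) = _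
    rw [Polynomial.toLaurent_X, ev_T]
    simp
  have h2 := DFunLike.congr_fun this p
  simpa [Polynomial.coe_aeval_eq_eval] using h2

lemma dvd_of_ev_eq_zero (ζ : ℂˣ) (u : LP) (h : ev ζ u = 0) : zsub (ζ : ℂ) ∣ u := by
  obtain ⟨n, p, hp⟩ := u.exists_T_pow
  have hroot : Polynomial.eval (ζ : ℂ) p = 0 := by
    rw [← ev_toLaurent ζ p, hp, _root_.map_mul, h, zero_mul]
  have hdvd : (Polynomial.X - Polynomial.C (ζ : ℂ)) ∣ p :=
    Polynomial.dvd_iff_isRoot.mpr hroot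
  have h2 : zsub (ζ : ℂ) ∣ u * T (n : ℤ) := by
    rw [← hp]
    have := map_dvd Polynomial.toLaurent hdvd
    simpa [zsub, Polynomial.toLaurent_X, Polynomial.toLaurent_C] using this
  exact (isUnit_T (n : ℤ)).dvd_mul_right.mp h2

lemma ev_zsub_self (ζ : ℂˣ) : ev ζ (zsub (ζ : ℂ)) = 0 := by
  rw [zsub, map_sub, ev_T, ev_C]
  simp

lemma zsub_ne_zero (a : ℂ) : zsub a ≠ 0 := by
  intro h
  have h1 := congrArg (fun f : LP => f.coeff 1) h
  simp only [zsub] at h1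
  rw [show ((T 1 - LaurentPolynomial.C a : LP).coeff 1) = (T 1 : LP).coeff 1 - (LaurentPolynomial.C a : LP).coeff 1
    from rfl] at h1
  simp at h1

lemma symT_eq (u : LP) (ε : ℂ) (c : ℤ) (h : SymT u ε c) :
    u = LaurentPolynomial.C ε * T c * invert u := by
  rw [← single_eq_C_mul_T]
  ext k
  rw [AddMonoidAlgebra.coeff_single_mul_apply (invert u) ε c k, invert_apply,
      show -(-c + k) = c - k by ring]
  exact h k

lemma key (u : LP) (ε : ℂ) (c : ℤ)
    (hsym : u = LaurentPolynomial.C ε * T c * invert u)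
    (ζ : ℂˣ) (hζ : (ζ : ℂ) * (ζ : ℂ) = 1) (m : ℕ) (hm : mzIs u (ζ : ℂ) m) :
    ε * (ζ : ℂ) ^ c * (-1 : ℂ) ^ m = 1 := by
  obtain ⟨w, hw⟩ := hm.1
  have hwne : ev ζ w ≠ 0 := by
    intro h0
    obtain ⟨v, hv⟩ := dvd_of_ev_eq_zero ζ w h0
    exact hm.2 ⟨v, by rw [hw, hv]; ring⟩
  have hζinv : (ζ : ℂ)⁻¹ = (ζ : ℂ) := inv_eq_of_mul_eq_one_right hζ
  have hζu : ζ⁻¹ = ζ := Units.ext (by rw [Units.val_inv_eq_inv_val, hζinv])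
  have hinv : invert (zsub (ζ : ℂ)) = T (-1) * LaurentPolynomial.C (-(ζ:ℂ)) * zsub (ζ : ℂ) := by
    have hT : (T (-1) : LP) * T 1 = 1 := by rw [← T_add]; norm_num
    rw [zsub, map_sub, invert_T, invert_C]
    have he : (T (-1) : LP) * LaurentPolynomial.C (-(ζ:ℂ)) * (T 1 - LaurentPolynomial.C (ζ:ℂ))
        = (T (-1) * T 1) * LaurentPolynomial.C (-(ζ:ℂ))
          - (LaurentPolynomial.C (-(ζ:ℂ)) * LaurentPolynomial.C (ζ:ℂ)) * T (-1) := by ring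
    rw [he, hT, one_mul, ← _root_.map_mul]
    rw [show -(ζ:ℂ) * (ζ:ℂ) = -1 by rw [neg_mul, hζ]]
    rw [map_neg, show (LaurentPolynomial.C (-1:ℂ) : LP) = -1 by simp]
    ring
  have hcancel : w = LaurentPolynomial.C ε * T c
      * (T (-1) * LaurentPolynomial.C (-(ζ:ℂ))) ^ m * invert w := by
    have hne : (zsub (ζ:ℂ)) ^ m ≠ 0 := pow_ne_zero _ (zsub_ne_zero _)
    apply mul_left_cancel₀ hne
    calc zsub (ζ:ℂ) ^ m * w = u := hw.symm
      _ = LaurentPolynomial.C ε * T c * invert (zsub (ζ:ℂ) ^ m * w) := by rw [← hw]; exact hsym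
      _ = LaurentPolynomial.C ε * T c * ((invert (zsub (ζ:ℂ)))^m * invert w) := by
            rw [_root_.map_mul, map_pow]
      _ = zsub (ζ:ℂ) ^ m * (LaurentPolynomial.C ε * T c
            * (T (-1) * LaurentPolynomial.C (-(ζ:ℂ))) ^ m * invert w) := by
            rw [hinv]; ring
  have heq := congrArg (ev ζ) hcancel
  simp only [_root_.map_mul, map_pow, ev_C, ev_T, ev_invert, hζu] at heq
  have h2 : ((ζ:ℂ) ^ (-1:ℤ) * (-(ζ:ℂ))) = -1 := by
    rw [_root_.zpow_neg, zpow_one, hζinv, mul_neg, hζ]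
  rw [h2] at heq
  exact mul_right_cancel₀ hwne (by rw [one_mul]; exact heq.symm)

/-- the symmetry type is determined mod 2 by the multiplicities of the
zeros at `±1` (Lemma 3.2 of the paper). -/
theorem symmetry_type_from_roots_at_pm_one
    (u : LP) (hu : u ≠ 0) (ε : ℂ) (c : ℤ) (hε : Sgn ε) (h : SymT u ε c)
    (m₁ m₂ : ℕ) (h₁ : mzIs u 1 m₁) (h₂ : mzIs u (-1) m₂) :
    ε = (-1 : ℂ) ^ m₁ ∧ c % 2 = ((m₁ : ℤ) + (m₂ : ℤ)) % 2 := by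
  have hsym := symT_eq u ε c h
  have h1u : mzIs u ((1:ℂˣ):ℂ) m₁ := by simpa using h₁
  have h2u : mzIs u (((-1:ℂˣ)):ℂ) m₂ := by simpa using h₂
  have k1 := key u ε c hsym 1 (by simp) m₁ h1u
  have k2 := key u ε c hsym (-1) (by simp) m₂ h2u
  simp only [Units.val_one, _root_.one_zpow, mul_one] at k1
  simp only [Units.val_neg, Units.val_one] at k2
  have hsq : ((-1:ℂ)^m₁) * ((-1:ℂ)^m₁) = 1 := by
    rw [← pow_add]; exact Even.neg_one_pow ⟨m₁, rfl⟩
  have hε1 : ε = (-1:ℂ)^m₁ := by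
    calc ε = ε * ((-1:ℂ)^m₁ * (-1:ℂ)^m₁) := by rw [hsq, mul_one]
      _ = (ε * (-1:ℂ)^m₁) * (-1:ℂ)^m₁ := by ring
      _ = (-1:ℂ)^m₁ := by rw [k1, one_mul]
  refine ⟨hε1, ?_⟩
  rw [hε1] at k2
  have hne : (-1:ℂ) ≠ 0 := by norm_num
  have hz : (-1:ℂ) ^ ((m₁:ℤ) + c + (m₂:ℤ)) = 1 := by
    rw [zpow_add₀ hne, zpow_add₀ hne, zpow_natCast, zpow_natCast]
    calc (-1:ℂ)^m₁ * (-1:ℂ)^c * (-1:ℂ)^m₂ = (-1:ℂ)^m₁ * (-1:ℂ)^c * (-1:ℂ)^m₂ := rfl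
      _ = 1 := k2
  rcases Int.even_or_odd ((m₁:ℤ) + c + (m₂:ℤ)) with he | ho
  · obtain ⟨r, hr⟩ := he
    omega
  · exfalso
    rw [Odd.neg_one_zpow ho] at hz
    norm_num at hz

end QT
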